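/- Let c₁ ≤ c₁'' < ∞ and c₂ ≤ c₂'' < ∞ with c₁ < c₁'' and c₂ < c₂'', and let f, g be continuous on the region R = [c₁, c₁'') × [c₂, c₂'') with f(w,z) > 0 and g(w,z) > 0 for all (w,z) ∈ R. Assume g(w,z) → +∞ as z → c₂''⁻, uniformly for w ∈ [c₁, c₁''] (i.e., for every M > 0 there is δ > 0 such that g(w,z) > M whenever c₂'' − δ < z < c₂'' and c₁ ≤ w ≤ c₁''). Then every maximal solution w, z : [0,T) → ℝ of w' = f(w,z), z' = g(w,z) with w(0) = c₁, z(0) = c₂ and (w(t),z(t)) ∈ R for all t ∈ [0,T) quenches in finite time: T < ∞, w and z are strictly increasing on [0,T), and as t → T⁻ either z(t) → c₂'' with |z'(t)| unbounded, or w(t) → c₁''. -/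

import Mathlib

open Set MeasureTheory Filter
open scoped NNReal Topology

/-- monotone bounded function tends to its sup at the right end. -/
lemma qtc_tendsto_sSup {φ : ℝ → ℝ} {T : ℝ} (hT : 0 < T) (hm : MonotoneOn φ (Ico 0 T))
    (hbdd : BddAbove (φ '' Ico 0 T)) :
    Tendsto φ (nhdsWithin T (Iio T)) (nhds (sSup (φ '' Ico 0 T))) := by
  rw [tendsto_order]
  constructor
  · intro A hA
    obtain ⟨y, hymem, hy⟩ :=
      exists_lt_of_lt_csSup ⟨φ 0, Set.mem_image_of_mem φ (show (0:ℝ) ∈ Set.Ico (0:ℝ) T from ⟨le_refl 0, hT⟩)⟩ hA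
    obtain ⟨t₀, ht₀, rfl⟩ := hymem
    filter_upwards [Ioo_mem_nhdsLT ht₀.2] with s hs
    exact hy.trans_le (hm ht₀ ⟨le_trans ht₀.1 hs.1.le, hs.2⟩ hs.1.le)
  · intro A hA
    filter_upwards [Ioo_mem_nhdsLT hT] with s hs
    exact lt_of_le_of_lt (le_csSup hbdd ⟨s, ⟨hs.1.le, hs.2⟩, rfl⟩) hA

/-- monotonicity from nonneg derivative-within on Icc. -/
lemma qtc_mono {φ d : ℝ → ℝ} {a c : ℝ}
    (hd : ∀ s ∈ Icc a c, HasDerivWithinAt φ (d s) (Icc a c) s)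
    (h0 : ∀ s ∈ Icc a c, 0 ≤ d s) : MonotoneOn φ (Icc a c) := by
  apply monotoneOn_of_deriv_nonneg (convex_Icc a c)
  · exact fun s hs => (hd s hs).continuousWithinAt
  · rw [interior_Icc]
    exact fun s hs => (((hd s (Ioo_subset_Icc_self hs)).hasDerivAt
      (Icc_mem_nhds hs.1 hs.2)).differentiableAt).differentiableWithinAt
  · rw [interior_Icc]
    intro s hs
    rw [((hd s (Ioo_subset_Icc_self hs)).hasDerivAt (Icc_mem_nhds hs.1 hs.2)).deriv]
    exact h0 s (Ioo_subset_Icc_self hs)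

/-- One-sided Gronwall: if `u a = 0` and `u' ≥ -lam * |u|` on `[a,c]`, then `u ≥ 0` there. -/
lemma qtc_nonneg {u d : ℝ → ℝ} {a c lam : ℝ} (hlam : 0 ≤ lam) (hua : u a = 0)
    (hd : ∀ s ∈ Icc a c, HasDerivWithinAt u (d s) (Icc a c) s)
    (hge : ∀ s ∈ Icc a c, -(lam * |u s|) ≤ d s) :
    ∀ s ∈ Icc a c, 0 ≤ u s := by
  by_contra hcon
  push_neg at hcon
  obtain ⟨s₀, hs₀, hneg⟩ := hcon
  have ucont : ContinuousOn u (Icc a c) := fun s hs => (hd s hs).continuousWithinAt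
  set E : Set ℝ := Icc a s₀ ∩ u ⁻¹' {0} with hE
  have hsub : Icc a s₀ ⊆ Icc a c := Icc_subset_Icc_right hs₀.2
  have hEclosed : IsClosed E :=
    (ucont.mono hsub).preimage_isClosed_of_isClosed isClosed_Icc isClosed_singleton
  have hEne : E.Nonempty := ⟨a, ⟨le_refl a, hs₀.1⟩, hua⟩
  have hEbdd : BddAbove E := ⟨s₀, fun s hs => hs.1.2⟩
  set σ := sSup E with hσ
  have hσE : σ ∈ E := hEclosed.csSup_mem hEne hEbdd
  have huσ : u σ = 0 := hσE.2
  have hσs₀ : σ ≤ s₀ := hσE.1.2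
  have hσIcc : σ ∈ Icc a c := ⟨hσE.1.1, hσs₀.trans hs₀.2⟩
  have hσlt : σ < s₀ := by
    rcases lt_or_eq_of_le hσs₀ with h | h
    · exact h
    · exfalso; rw [h] at huσ; rw [huσ] at hneg; exact lt_irrefl 0 hneg
  have key : ∀ s ∈ Icc σ s₀, u s ≤ 0 := by
    intro s hs
    rcases eq_or_lt_of_le hs.1 with h | h
    · rw [← h, huσ]
    rcases lt_trichotomy (u s) 0 with h' | h' | h'
    · exact h'.le
    · exact h'.le
    · exfalso
      have hivt := intermediate_value_Icc' hs.2 (ucont.mono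
        (Icc_subset_Icc (hσIcc.1.trans h.le) hs₀.2))
      have h0mem : (0:ℝ) ∈ Icc (u s₀) (u s) := ⟨hneg.le, h'.le⟩
      obtain ⟨s', hs', hu'⟩ := hivt h0mem
      have hs'E : s' ∈ E := ⟨⟨hσIcc.1.trans (h.le.trans hs'.1), hs'.2⟩, hu'⟩
      have := le_csSup hEbdd hs'E
      exact absurd (h.trans_le hs'.1) (not_lt.2 this)
  -- the function v s = exp(-(lam*s)) * u s is monotone on [σ, s₀]
  set v : ℝ → ℝ := fun s => Real.exp (-(lam * s)) * u s with hv
  have hexp : ∀ s : ℝ, HasDerivAt (fun s => Real.exp (-(lam * s)))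
      (Real.exp (-(lam * s)) * -lam) s := by
    intro s
    have h1 : HasDerivAt (fun s : ℝ => -(lam * s)) (-lam) s := by
      have := ((hasDerivAt_id s).const_mul lam).neg; rw [mul_one] at this; exact this
    exact (Real.hasDerivAt_exp _).comp s h1
  have hv' : ∀ s ∈ Icc σ s₀, HasDerivWithinAt v
      (Real.exp (-(lam * s)) * -lam * u s + Real.exp (-(lam * s)) * d s) (Icc σ s₀) s := by
    intro s hs
    have hds : HasDerivWithinAt u (d s) (Icc σ s₀) s :=
      (hd s ⟨hσIcc.1.trans hs.1, hs.2.trans hs₀.2⟩).mono (Icc_subset_Icc hσIcc.1 hs₀.2)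
    exact ((hexp s).hasDerivWithinAt).mul hds
  have hnon : ∀ s ∈ Icc σ s₀, 0 ≤ Real.exp (-(lam * s)) * -lam * u s
      + Real.exp (-(lam * s)) * d s := by
    intro s hs
    have hus : u s ≤ 0 := key s hs
    have habs : |u s| = -u s := abs_of_nonpos hus
    have hds : lam * u s ≤ d s := by
      have := hge s ⟨hσIcc.1.trans hs.1, hs.2.trans hs₀.2⟩
      rw [habs] at this; linarith
    have he := Real.exp_pos (-(lam * s))
    nlinarith
  have hmono := qtc_mono hv' hnon
  have := hmono (left_mem_Icc.2 hσlt.le) (right_mem_Icc.2 hσlt.le) hσlt.le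
  have hvσ : v σ = 0 := by rw [hv]; simp [huσ]
  rw [hvσ] at this
  have he := Real.exp_pos (-(lam * s₀))
  have hv0 : 0 ≤ Real.exp (-(lam * s₀)) * u s₀ := this
  nlinarith

set_option maxHeartbeats 1000000 in
/-- Scalar Peano existence theorem, for increasing solutions with slope in `[0, K]`. -/
lemma qtc_peano {a ρ b r K : ℝ} {h : ℝ → ℝ → ℝ}
    (hρ : 0 < ρ) (hK : 0 ≤ K) (hKρ : K * ρ ≤ r)
    (hcont : ContinuousOn (fun p : ℝ × ℝ => h p.1 p.2) (Icc a (a + ρ) ×ˢ Icc b (b + r)))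
    (hlb : ∀ s ∈ Icc a (a + ρ), ∀ x ∈ Icc b (b + r), 0 ≤ h s x)
    (hub : ∀ s ∈ Icc a (a + ρ), ∀ x ∈ Icc b (b + r), h s x ≤ K) :
    ∃ x : ℝ → ℝ, x a = b ∧ ContinuousOn x (Icc a (a + ρ)) ∧
      (∀ s ∈ Icc a (a + ρ), b ≤ x s ∧ x s ≤ b + K * (s - a)) ∧
      ∀ s ∈ Icc a (a + ρ), HasDerivWithinAt x (h s (x s)) (Icc a (a + ρ)) s := by
  have hr : (0:ℝ) ≤ r := le_trans (by positivity) hKρ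
  set c := a + ρ with hc
  have hac : a ≤ c := by rw [hc]; linarith
  have hbr : b ≤ b + r := by linarith
  -- clamping maps
  set π₁ : ℝ → ℝ := fun s => min (max s a) c with hπ₁
  set π₂ : ℝ → ℝ := fun v => min (max v b) (b + r) with hπ₂
  have hπ₁mem : ∀ s, π₁ s ∈ Icc a c := fun s =>
    ⟨le_min (le_max_right s a) hac, min_le_right _ _⟩
  have hπ₂mem : ∀ v, π₂ v ∈ Icc b (b + r) := fun v =>
    ⟨le_min (le_max_right v b) hbr, min_le_right _ _⟩
  have hπ₁id : ∀ s ∈ Icc a c, π₁ s = s := fun s hs => by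
    rw [hπ₁]; simp only [max_eq_left hs.1, min_eq_left hs.2]
  have hπ₂id : ∀ v ∈ Icc b (b + r), π₂ v = v := fun v hv => by
    rw [hπ₂]; simp only [max_eq_left hv.1, min_eq_left hv.2]
  have hπlip : ∀ lo hi s s' : ℝ, |min (max s lo) hi - min (max s' lo) hi| ≤ |s - s'| := by
    intro lo hi s s'
    refine le_trans (abs_min_sub_min_le_max _ _ _ _) ?_
    rw [sub_self, abs_zero]
    exact max_le (abs_max_sub_max_le_abs _ _ _) (abs_nonneg _)
  have hπ₁cont : Continuous π₁ := ((continuous_id.max continuous_const).min continuous_const)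
  have hπ₂cont : Continuous π₂ := ((continuous_id.max continuous_const).min continuous_const)
  -- globally defined extension of h
  set ht : ℝ → ℝ → ℝ := fun s v => h (π₁ s) (π₂ v) with hht
  have hteq : ∀ s ∈ Icc a c, ∀ v ∈ Icc b (b + r), ht s v = h s v := fun s hs v hv => by
    rw [hht]; simp only [hπ₁id s hs, hπ₂id v hv]
  have ht0 : ∀ s v, 0 ≤ ht s v := fun s v => hlb _ (hπ₁mem s) _ (hπ₂mem v)
  have htK : ∀ s v, ht s v ≤ K := fun s v => hub _ (hπ₁mem s) _ (hπ₂mem v)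
  have htcont : Continuous (fun p : ℝ × ℝ => ht p.1 p.2) := by
    apply hcont.comp_continuous ((hπ₁cont.comp continuous_fst).prodMk
      (hπ₂cont.comp continuous_snd))
    exact fun p => ⟨hπ₁mem p.1, hπ₂mem p.2⟩
  -- uniform continuity modulus
  have hUC : ∀ ε > (0:ℝ), ∃ δ > (0:ℝ), ∀ s s' v v' : ℝ,
      |s - s'| ≤ δ → |v - v'| ≤ δ → |ht s v - ht s' v'| ≤ ε := by
    intro ε hε
    have hcomp : IsCompact (Icc a c ×ˢ Icc b (b + r)) := isCompact_Icc.prod isCompact_Icc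
    have huc := hcomp.uniformContinuousOn_of_continuous hcont
    rw [Metric.uniformContinuousOn_iff_le] at huc
    obtain ⟨δ, hδ, hd⟩ := huc ε hε
    refine ⟨δ, hδ, fun s s' v v' hs hv => ?_⟩
    have h1 := hd (π₁ s, π₂ v) (mk_mem_prod (hπ₁mem s) (hπ₂mem v))
      (π₁ s', π₂ v') (mk_mem_prod (hπ₁mem s') (hπ₂mem v')) ?_
    · rw [← Real.dist_eq]; exact h1
    · rw [Prod.dist_eq]
      refine max_le ?_ ?_
      · rw [Real.dist_eq]; exact le_trans (hπlip a c s s') hs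
      · rw [Real.dist_eq]; exact le_trans (hπlip b (b + r) v v') hv
  -- Lipschitz approximations from below
  set H : ℕ → ℝ → ℝ → ℝ := fun n s v => ⨅ v' : ℝ, (ht s v' + n * |v - v'|) with hH
  have bddH : ∀ (n : ℕ) (s v : ℝ), BddBelow (Set.range fun v' => ht s v' + (n:ℝ) * |v - v'|) := by
    intro n s v
    refine ⟨0, ?_⟩
    rintro _ ⟨v', rfl⟩
    show (0:ℝ) ≤ ht s v' + (n:ℝ) * |v - v'|
    have h1 := ht0 s v'
    have h2 : (0:ℝ) ≤ (n:ℝ) * |v - v'| := by positivity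
    linarith
  have Hle : ∀ n s v, H n s v ≤ ht s v := by
    intro n s v
    have := ciInf_le (bddH n s v) v
    simpa using this
  have H0 : ∀ n s v, 0 ≤ H n s v := by
    intro n s v
    refine le_ciInf fun v' => ?_
    have h1 := ht0 s v'
    have h2 : (0:ℝ) ≤ (n:ℝ) * |v - v'| := by positivity
    linarith
  have HK : ∀ n s v, H n s v ≤ K := fun n s v => (Hle n s v).trans (htK s v)
  have Hmn : ∀ m n : ℕ, m ≤ n → ∀ s v, H m s v ≤ H n s v := by
    intro m n hmn s v
    refine le_ciInf fun v' => ?_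
    refine le_trans (ciInf_le (bddH m s v) v') ?_
    have : (m:ℝ) ≤ (n:ℝ) := Nat.cast_le.2 hmn
    nlinarith [abs_nonneg (v - v')]
  have Hlip : ∀ (n : ℕ) s v u, H n s v ≤ H n s u + n * |v - u| := by
    intro n s v u
    rw [← sub_le_iff_le_add]
    refine le_ciInf fun v' => ?_
    rw [sub_le_iff_le_add]
    refine le_trans (ciInf_le (bddH n s v) v') ?_
    have htri : |v - v'| ≤ |v - u| + |u - v'| := abs_sub_le v u v'
    have : (n:ℝ) * |v - v'| ≤ (n:ℝ) * (|v - u| + |u - v'|) :=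
      mul_le_mul_of_nonneg_left htri (Nat.cast_nonneg n)
    linarith
  have Hts : ∀ ε > (0:ℝ), ∃ δ > (0:ℝ), ∀ (n : ℕ) s s' v, |s - s'| ≤ δ →
      H n s v ≤ H n s' v + ε := by
    intro ε hε
    obtain ⟨δ, hδ, hd⟩ := hUC ε hε
    refine ⟨δ, hδ, fun n s s' v hss => ?_⟩
    rw [← sub_le_iff_le_add]
    refine le_ciInf fun v' => ?_
    rw [sub_le_iff_le_add]
    refine le_trans (ciInf_le (bddH n s v) v') ?_
    have := hd s s' v' v' hss (by simp [hδ.le])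
    linarith [(abs_le.1 this).2]
  have Happrox : ∀ ε > (0:ℝ), ∃ N : ℕ, ∀ n ≥ N, ∀ s v, ht s v - ε ≤ H n s v := by
    intro ε hε
    obtain ⟨δ, hδ, hd⟩ := hUC ε hε
    refine ⟨⌈K / δ⌉₊, fun n hn s v => ?_⟩
    refine le_ciInf fun v' => ?_
    by_cases hcase : |v - v'| ≤ δ
    · have := hd s s v v' (by simp [hδ.le]) hcase
      have h2 := (abs_le.1 this).2
      have h3 : (0:ℝ) ≤ (n:ℝ) * |v - v'| :=
        mul_nonneg (Nat.cast_nonneg n) (abs_nonneg _)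
      linarith
    · push_neg at hcase
      have h1 : K / δ ≤ (⌈K / δ⌉₊ : ℝ) := Nat.le_ceil _
      have h2 : ((⌈K / δ⌉₊ : ℕ) : ℝ) ≤ (n : ℝ) := Nat.cast_le.2 hn
      have h3 : K ≤ (n:ℝ) * δ := by
        rw [div_le_iff₀ hδ] at h1
        nlinarith
      have h4 : (n:ℝ) * δ ≤ (n:ℝ) * |v - v'| :=
        mul_le_mul_of_nonneg_left hcase.le (Nat.cast_nonneg n)
      have := ht0 s v'
      have := htK s v
      linarith
    -- continuity of the approximations
  have HcontT : ∀ (n : ℕ) (v : ℝ), Continuous fun s => H n s v := by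
    intro n v
    rw [Metric.continuous_iff]
    intro s ε hε
    obtain ⟨δ, hδ, hd⟩ := Hts (ε/2) (by linarith)
    refine ⟨δ, hδ, fun s' hs' => ?_⟩
    have h1 : |s' - s| ≤ δ := by rw [Real.dist_eq] at hs'; exact hs'.le
    have h2 : |s - s'| ≤ δ := by rw [abs_sub_comm]; exact h1
    have h3 := hd n s' s v h1
    have h4 := hd n s s' v h2
    rw [Real.dist_eq]
    have : |H n s' v - H n s v| ≤ ε/2 := abs_le.2 ⟨by linarith, by linarith⟩
    linarith
  have Hjoint : ∀ n : ℕ, Continuous fun p : ℝ × ℝ => H n p.1 p.2 := by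
    intro n
    rw [Metric.continuous_iff]
    rintro ⟨s₀, v₀⟩ ε hε
    obtain ⟨δ₁, hδ₁, hd₁⟩ := Hts (ε/3) (by linarith)
    have hden : (0:ℝ) < 3 * ((n:ℝ) + 1) := by positivity
    refine ⟨min δ₁ (ε / (3 * ((n:ℝ) + 1))), lt_min hδ₁ (by positivity), ?_⟩
    rintro ⟨s, v⟩ hdist
    rw [Prod.dist_eq] at hdist
    have hs : |s - s₀| ≤ δ₁ := by
      have := (max_lt_iff.1 hdist).1
      rw [Real.dist_eq] at this
      exact this.le.trans (min_le_left _ _)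
    have hv : |v - v₀| ≤ ε / (3 * ((n:ℝ) + 1)) := by
      have := (max_lt_iff.1 hdist).2
      rw [Real.dist_eq] at this
      exact this.le.trans (min_le_right _ _)
    have hs' : |s₀ - s| ≤ δ₁ := by rw [abs_sub_comm]; exact hs
    have e1 : |H n s v - H n s v₀| ≤ (n:ℝ) * |v - v₀| := by
      have l1 := Hlip n s v v₀
      have l2 := Hlip n s v₀ v
      rw [abs_sub_comm v₀ v] at l2
      exact abs_le.2 ⟨by linarith, by linarith⟩
    have e2 : |H n s v₀ - H n s₀ v₀| ≤ ε/3 := by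
      have l1 := hd₁ n s s₀ v₀ hs
      have l2 := hd₁ n s₀ s v₀ hs'
      exact abs_le.2 ⟨by linarith, by linarith⟩
    have e3 : (n:ℝ) * |v - v₀| ≤ ε/3 := by
      have : (n:ℝ) * |v - v₀| ≤ (n:ℝ) * (ε / (3 * ((n:ℝ) + 1))) :=
        mul_le_mul_of_nonneg_left hv (Nat.cast_nonneg n)
      have h5 : (n:ℝ) * (ε / (3 * ((n:ℝ) + 1))) ≤ ε/3 := by
        rw [← mul_div_assoc, div_le_div_iff₀ hden (by norm_num : (0:ℝ) < 3)]
        nlinarith [Nat.cast_nonneg (α := ℝ) n]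
      linarith
    rw [Real.dist_eq]
    calc |H n s v - H n s₀ v₀|
        ≤ |H n s v - H n s v₀| + |H n s v₀ - H n s₀ v₀| := abs_sub_le _ _ _
      _ ≤ (n:ℝ) * |v - v₀| + ε/3 := add_le_add e1 e2
      _ ≤ ε/3 + ε/3 := by linarith
      _ < ε := by linarith
    -- Picard-Lindelof solutions for the approximations
  have hPL : ∀ n : ℕ, ∃ f : ℝ → ℝ, f a = b ∧
      ∀ t ∈ Icc a c, HasDerivWithinAt f (H n t (f t)) (Icc a c) t := by
    intro n
    have hK' : ((Real.toNNReal K : ℝ≥0) : ℝ) = K := Real.coe_toNNReal K hK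
    refine IsPicardLindelof.exists_eq_forall_mem_Icc_hasDerivWithinAt₀
      (f := fun t v => H n t v) (t₀ := (⟨a, left_mem_Icc.2 hac⟩ : Icc a c)) (x₀ := b)
      (a := Real.toNNReal (K * ρ + 1)) (L := Real.toNNReal K) (K := (n : ℝ≥0)) ?_
    refine ⟨?_, ?_, ?_, ?_⟩
    · intro t _
      refine (LipschitzWith.of_dist_le_mul fun v u => ?_).lipschitzOnWith
      rw [Real.dist_eq, Real.dist_eq]
      push_cast
      have l1 := Hlip n t v u
      have l2 := Hlip n t u v
      rw [abs_sub_comm u v] at l2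
      exact abs_le.2 ⟨by linarith, by linarith⟩
    · exact fun v _ => (HcontT n v).continuousOn
    · intro t _ v _
      rw [Real.norm_eq_abs, abs_of_nonneg (H0 n t v), hK']
      exact HK n t v
    · have h1 : c - a = ρ := by rw [hc]; ring
      simp only [h1, sub_self, max_eq_left hρ.le, hK', NNReal.coe_zero, sub_zero,
        Real.coe_toNNReal _ (by positivity : (0:ℝ) ≤ K * ρ + 1)]
      linarith
  choose X hXa hX using hPL
  have contX : ∀ n : ℕ, ContinuousOn (X n) (Icc a c) :=
    fun n s hs => (hX n s hs).continuousWithinAt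
  have monoX : ∀ n : ℕ, MonotoneOn (X n) (Icc a c) :=
    fun n => qtc_mono (hX n) (fun s _ => H0 n s (X n s))
  have lbX : ∀ n : ℕ, ∀ s ∈ Icc a c, b ≤ X n s := by
    intro n s hs
    have := monoX n (left_mem_Icc.2 hac) hs hs.1
    rwa [hXa n] at this
  have ubX : ∀ n : ℕ, ∀ s ∈ Icc a c, X n s ≤ b + K * (s - a) := by
    intro n s hs
    have hseg := norm_image_sub_le_of_norm_deriv_le_segment' (hX n)
      (fun σ hσ => by
        rw [Real.norm_eq_abs, abs_of_nonneg (H0 n σ (X n σ))]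
        exact HK n σ (X n σ)) s hs
    rw [hXa n, Real.norm_eq_abs] at hseg
    have := (le_abs_self (X n s - b)).trans hseg
    linarith
  have lipX : ∀ n : ℕ, ∀ s ∈ Icc a c, ∀ s' ∈ Icc a c, s ≤ s' →
      |X n s' - X n s| ≤ K * (s' - s) := by
    intro n s hs s' hs' hss
    have hsub : Icc s s' ⊆ Icc a c := Icc_subset_Icc hs.1 hs'.2
    have hseg := norm_image_sub_le_of_norm_deriv_le_segment'
      (f := X n) (f' := fun σ => H n σ (X n σ)) (a := s) (b := s')
      (fun σ hσ => (hX n σ (hsub hσ)).mono hsub)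
      (fun σ hσ => by
        rw [Real.norm_eq_abs, abs_of_nonneg (H0 n σ (X n σ))]
        exact HK n σ (X n σ)) s' (right_mem_Icc.2 hss)
    rwa [Real.norm_eq_abs] at hseg
  -- comparison: the sequence is monotone in n
  have compX : ∀ m n : ℕ, m ≤ n → ∀ s ∈ Icc a c, X m s ≤ X n s := by
    intro m n hmn s hs
    have hu : ∀ σ ∈ Icc a c, HasDerivWithinAt (fun τ => X n τ - X m τ)
        (H n σ (X n σ) - H m σ (X m σ)) (Icc a c) σ :=
      fun σ hσ => (hX n σ hσ).sub (hX m σ hσ)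
    have hge : ∀ σ ∈ Icc a c,
        -((m:ℝ) * |X n σ - X m σ|) ≤ H n σ (X n σ) - H m σ (X m σ) := by
      intro σ hσ
      have h1 := Hlip m σ (X m σ) (X n σ)
      have h2 := Hmn m n hmn σ (X n σ)
      rw [abs_sub_comm (X m σ) (X n σ)] at h1
      linarith
    have := qtc_nonneg (Nat.cast_nonneg m) (by rw [hXa n, hXa m, sub_self]) hu hge s hs
    linarith
    -- the limit function
  set x : ℝ → ℝ := fun s => ⨆ n : ℕ, X n s with hx
  have bddA : ∀ s ∈ Icc a c, BddAbove (Set.range fun n : ℕ => X n s) := by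
    intro s hs
    refine ⟨b + K * (s - a), ?_⟩
    rintro _ ⟨n, rfl⟩
    exact ubX n s hs
  have monN : ∀ s ∈ Icc a c, Monotone fun n : ℕ => X n s :=
    fun s hs m n hmn => compX m n hmn s hs
  have htendX : ∀ s ∈ Icc a c, Tendsto (fun n : ℕ => X n s) atTop (𝓝 (x s)) :=
    fun s hs => tendsto_atTop_ciSup (monN s hs) (bddA s hs)
  have hxa : x a = b := by
    rw [hx]
    simp only [hXa]
    exact ciSup_const
  have hxlb : ∀ s ∈ Icc a c, b ≤ x s :=
    fun s hs => (lbX 0 s hs).trans (le_ciSup (bddA s hs) 0)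
  have hxub : ∀ s ∈ Icc a c, x s ≤ b + K * (s - a) :=
    fun s hs => ciSup_le fun n => ubX n s hs
  have hxmem : ∀ s ∈ Icc a c, x s ∈ Icc b (b + r) := by
    intro s hs
    refine ⟨hxlb s hs, (hxub s hs).trans ?_⟩
    have h1 : s - a ≤ ρ := by
      have := hs.2; rw [hc] at this; linarith
    nlinarith [mul_le_mul_of_nonneg_left h1 hK]
  have hxlip : ∀ s ∈ Icc a c, ∀ s' ∈ Icc a c, |x s' - x s| ≤ K * |s' - s| := by
    have key : ∀ s ∈ Icc a c, ∀ s' ∈ Icc a c, s ≤ s' → |x s' - x s| ≤ K * |s' - s| := by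
      intro s hs s' hs' hss
      have htd : Tendsto (fun n : ℕ => |X n s' - X n s|) atTop (𝓝 (|x s' - x s|)) :=
        ((htendX s' hs').sub (htendX s hs)).abs
      refine le_of_tendsto htd (Filter.Eventually.of_forall fun n => ?_)
      have := lipX n s hs s' hs' hss
      rwa [abs_of_nonneg (by linarith : (0:ℝ) ≤ s' - s)]
    intro s hs s' hs'
    rcases le_total s s' with hss | hss
    · exact key s hs s' hs' hss
    · rw [abs_sub_comm (x s') (x s), abs_sub_comm s' s]
      exact key s' hs' s hs hss
  have hxcont : ContinuousOn x (Icc a c) := by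
    refine LipschitzOnWith.continuousOn (K := Real.toNNReal K) ?_
    refine LipschitzOnWith.of_dist_le_mul fun u hu u' hu' => ?_
    rw [Real.dist_eq, Real.dist_eq, Real.coe_toNNReal K hK]
    exact hxlip u' hu' u hu
  -- integral equation for the approximations
  have contFn : ∀ n : ℕ, ContinuousOn (fun σ => H n σ (X n σ)) (Icc a c) := by
    intro n
    exact (Hjoint n).comp_continuousOn (continuousOn_id.prodMk (contX n))
  have hXint : ∀ n : ℕ, ∀ s ∈ Icc a c, X n s = b + ∫ σ in a..s, H n σ (X n σ) := by
    intro n s hs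
    have hsub : Icc a s ⊆ Icc a c := Icc_subset_Icc_right hs.2
    have heq := intervalIntegral.integral_eq_sub_of_hasDeriv_right_of_le hs.1
      ((contX n).mono hsub)
      (fun σ hσ => ((hX n σ (hsub ⟨hσ.1.le, hσ.2.le⟩)).hasDerivAt
        (Icc_mem_nhds (lt_of_lt_of_le hσ.1 (le_refl _) |>.trans_le (le_refl _))
          (hσ.2.trans_le hs.2))).hasDerivWithinAt)
      (by
        apply ContinuousOn.intervalIntegrable
        rw [uIcc_of_le hs.1]
        exact (contFn n).mono hsub)
    rw [hXa n] at heq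
    linarith
    -- pointwise convergence of the integrands
  have hptw : ∀ σ ∈ Icc a c, Tendsto (fun n : ℕ => H n σ (X n σ)) atTop (𝓝 (ht σ (x σ))) := by
    intro σ hσ
    rw [Metric.tendsto_atTop]
    intro ε hε
    obtain ⟨δ, hδ, hd⟩ := hUC (ε/3) (by linarith)
    obtain ⟨N₁, hN₁⟩ := Happrox (ε/3) (by linarith)
    obtain ⟨N₂, hN₂⟩ := Metric.tendsto_atTop.1 (htendX σ hσ) δ hδ
    refine ⟨max N₁ N₂, fun n hn => ?_⟩
    have hn₁ : n ≥ N₁ := le_trans (le_max_left _ _) hn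
    have hn₂ : n ≥ N₂ := le_trans (le_max_right _ _) hn
    have e1 : |H n σ (X n σ) - ht σ (X n σ)| ≤ ε/3 := by
      have l1 := Hle n σ (X n σ)
      have l2 := hN₁ n hn₁ σ (X n σ)
      exact abs_le.2 ⟨by linarith, by linarith⟩
    have e2 : |ht σ (X n σ) - ht σ (x σ)| ≤ ε/3 := by
      have := hN₂ n hn₂
      rw [Real.dist_eq] at this
      exact hd σ σ (X n σ) (x σ) (by simp [hδ.le]) this.le
    rw [Real.dist_eq]
    calc |H n σ (X n σ) - ht σ (x σ)|
        ≤ |H n σ (X n σ) - ht σ (X n σ)| + |ht σ (X n σ) - ht σ (x σ)| := abs_sub_le _ _ _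
      _ ≤ ε/3 + ε/3 := add_le_add e1 e2
      _ < ε := by linarith
  -- integral equation for the limit
  have hxint : ∀ s ∈ Icc a c, x s = b + ∫ σ in a..s, ht σ (x σ) := by
    intro s hs
    have hsubIoc : Set.uIoc a s ⊆ Icc a c := by
      rw [uIoc_of_le hs.1]
      exact fun σ hσ => ⟨hσ.1.le, hσ.2.trans hs.2⟩
    have hlim : Tendsto (fun n : ℕ => ∫ σ in a..s, H n σ (X n σ)) atTop
        (𝓝 (∫ σ in a..s, ht σ (x σ))) := by
      refine intervalIntegral.tendsto_integral_filter_of_dominated_convergence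
        (fun _ => K) ?_ ?_ ?_ ?_
      · refine Filter.Eventually.of_forall fun n => ?_
        exact ((contFn n).mono hsubIoc).aestronglyMeasurable measurableSet_uIoc
      · refine Filter.Eventually.of_forall fun n => ?_
        refine MeasureTheory.ae_of_all _ fun σ hσ => ?_
        rw [Real.norm_eq_abs, abs_of_nonneg (H0 n σ (X n σ))]
        exact HK n σ (X n σ)
      · exact intervalIntegrable_const
      · exact MeasureTheory.ae_of_all _ fun σ hσ => hptw σ (hsubIoc hσ)
    have hlim2 : Tendsto (fun n : ℕ => X n s) atTop (𝓝 (b + ∫ σ in a..s, ht σ (x σ))) := by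
      refine Tendsto.congr (fun n => (hXint n s hs).symm) (hlim.const_add b)
    exact tendsto_nhds_unique (htendX s hs) hlim2
  -- differentiate the integral equation
  set Ft : ℝ → ℝ := fun σ => ht σ (x (π₁ σ)) with hFt
  have hxπcont : Continuous fun σ => x (π₁ σ) :=
    hxcont.comp_continuous hπ₁cont hπ₁mem
  have hFtcont : Continuous Ft :=
    htcont.comp (continuous_id.prodMk hxπcont)
  have hFteq : ∀ σ ∈ Icc a c, Ft σ = ht σ (x σ) := by
    intro σ hσ
    rw [hFt]
    simp only [hπ₁id σ hσ]
  have hxG : ∀ s ∈ Icc a c, x s = b + ∫ σ in a..s, Ft σ := by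
    intro s hs
    rw [hxint s hs]
    congr 1
    apply intervalIntegral.integral_congr
    intro σ hσ
    rw [uIcc_of_le hs.1] at hσ
    exact (hFteq σ ⟨hσ.1, hσ.2.trans hs.2⟩).symm
  have hG : ∀ s : ℝ, HasDerivAt (fun t => b + ∫ σ in a..t, Ft σ) (Ft s) s := by
    intro s
    have := intervalIntegral.integral_hasDerivAt_right
      (hFtcont.intervalIntegrable a s)
      (hFtcont.stronglyMeasurableAtFilter _ _)
      hFtcont.continuousAt
    exact this.const_add b
  refine ⟨x, hxa, hxcont, fun s hs => ⟨hxlb s hs, hxub s hs⟩, fun s hs => ?_⟩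
  have h2 : HasDerivWithinAt x (Ft s) (Icc a c) s :=
    ((hG s).hasDerivWithinAt).congr (fun σ hσ => hxG σ hσ) (hxG s hs)
  have h3 : Ft s = h s (x s) := by
    rw [hFteq s hs]
    exact hteq s hs (x s) (hxmem s hs)
  rwa [h3] at h2

set_option maxHeartbeats 1000000 in
/-- Theorem C, part (2), of the paper: for `w' = f(w,z)`, `z' = g(w,z)` with `f, g > 0`
on the box `R = [c₁, c₁'') × [c₂, c₂'')` and `g(w,z) → +∞` as `z → c₂''⁻` uniformly in
`w`, every maximal solution starting at `(c₁, c₂)` and staying in `R` quenches in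
finite time: `w` and `z` are strictly increasing, and as `t → T⁻` either
`z(t) → c₂''` with `|z'(t)|` unbounded, or `w(t) → c₁''`. -/
theorem quenching_thmC_part2
    (c₁ c₁'' c₂ c₂'' T : ℝ)
    (hc₁ : 0 ≤ c₁) (hc₁'' : c₁ < c₁'') (hc₂ : 0 ≤ c₂) (hc₂'' : c₂ < c₂'')
    (f g : ℝ → ℝ → ℝ)
    (hf_cont : ContinuousOn (fun p : ℝ × ℝ => f p.1 p.2) (Ico c₁ c₁'' ×ˢ Ico c₂ c₂''))
    (hg_cont : ContinuousOn (fun p : ℝ × ℝ => g p.1 p.2) (Ico c₁ c₁'' ×ˢ Ico c₂ c₂''))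
    (hf_pos : ∀ x ∈ Ico c₁ c₁'', ∀ y ∈ Ico c₂ c₂'', 0 < f x y)
    (hg_pos : ∀ x ∈ Ico c₁ c₁'', ∀ y ∈ Ico c₂ c₂'', 0 < g x y)
    (hg_blow : ∀ M > (0 : ℝ), ∃ δ > (0 : ℝ), ∀ x y : ℝ,
      c₂'' - δ < y → y < c₂'' → c₁ ≤ x → x ≤ c₁'' → M < g x y)
    (hT : 0 < T)
    (w z : ℝ → ℝ)
    (hw0 : w 0 = c₁) (hz0 : z 0 = c₂)
    (hmem : ∀ t ∈ Ico (0 : ℝ) T, w t ∈ Ico c₁ c₁'' ∧ z t ∈ Ico c₂ c₂'')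
    (hw' : ∀ t ∈ Ico (0 : ℝ) T, HasDerivAt w (f (w t) (z t)) t)
    (hz' : ∀ t ∈ Ico (0 : ℝ) T, HasDerivAt z (g (w t) (z t)) t)
    (hmax : ¬ ∃ (T' : ℝ) (W Z : ℝ → ℝ), T < T' ∧
      (∀ t ∈ Ico (0 : ℝ) T, W t = w t ∧ Z t = z t) ∧
      W 0 = c₁ ∧ Z 0 = c₂ ∧
      (∀ t ∈ Ico (0 : ℝ) T', (W t ∈ Ico c₁ c₁'' ∧ Z t ∈ Ico c₂ c₂'') ∧
        HasDerivAt W (f (W t) (Z t)) t ∧ HasDerivAt Z (g (W t) (Z t)) t)) :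
    StrictMonoOn w (Ico (0 : ℝ) T) ∧ StrictMonoOn z (Ico (0 : ℝ) T) ∧
      ((Tendsto z (nhdsWithin T (Iio T)) (nhds c₂'') ∧
          ¬ ∃ M : ℝ, ∀ t ∈ Ico (0 : ℝ) T, |g (w t) (z t)| ≤ M) ∨
        Tendsto w (nhdsWithin T (Iio T)) (nhds c₁'')) := by
  -- strict monotonicity of w and z
  have hsw : StrictMonoOn w (Ico (0 : ℝ) T) := by
    intro s hs t ht hst
    have hIx : Icc s t ⊆ Ico 0 T := fun τ hτ => ⟨hs.1.trans hτ.1, lt_of_le_of_lt hτ.2 ht.2⟩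
    have hmono := strictMonoOn_of_deriv_pos (convex_Icc s t)
      (fun τ hτ => (hw' τ (hIx hτ)).continuousAt.continuousWithinAt)
      (fun τ hτ => by
        rw [interior_Icc] at hτ
        rw [(hw' τ (hIx (Ioo_subset_Icc_self hτ))).deriv]
        exact hf_pos _ (hmem τ (hIx (Ioo_subset_Icc_self hτ))).1 _
          (hmem τ (hIx (Ioo_subset_Icc_self hτ))).2)
    exact hmono (left_mem_Icc.2 hst.le) (right_mem_Icc.2 hst.le) hst
  have hsz : StrictMonoOn z (Ico (0 : ℝ) T) := by
    intro s hs t ht hst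
    have hIx : Icc s t ⊆ Ico 0 T := fun τ hτ => ⟨hs.1.trans hτ.1, lt_of_le_of_lt hτ.2 ht.2⟩
    have hmono := strictMonoOn_of_deriv_pos (convex_Icc s t)
      (fun τ hτ => (hz' τ (hIx hτ)).continuousAt.continuousWithinAt)
      (fun τ hτ => by
        rw [interior_Icc] at hτ
        rw [(hz' τ (hIx (Ioo_subset_Icc_self hτ))).deriv]
        exact hg_pos _ (hmem τ (hIx (Ioo_subset_Icc_self hτ))).1 _
          (hmem τ (hIx (Ioo_subset_Icc_self hτ))).2)
    exact hmono (left_mem_Icc.2 hst.le) (right_mem_Icc.2 hst.le) hst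
  refine ⟨hsw, hsz, ?_⟩
  -- the limits of w and z at T from the left
  have h0mem : (0:ℝ) ∈ Ico (0:ℝ) T := ⟨le_refl 0, hT⟩
  have hbw : BddAbove (w '' Ico (0:ℝ) T) := by
    refine ⟨c₁'', ?_⟩
    rintro _ ⟨t, ht, rfl⟩
    exact ((hmem t ht).1.2).le
  have hbz : BddAbove (z '' Ico (0:ℝ) T) := by
    refine ⟨c₂'', ?_⟩
    rintro _ ⟨t, ht, rfl⟩
    exact ((hmem t ht).2.2).le
  set L₁ := sSup (w '' Ico (0:ℝ) T) with hL₁def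
  set L₂ := sSup (z '' Ico (0:ℝ) T) with hL₂def
  have hwlim : Tendsto w (nhdsWithin T (Iio T)) (nhds L₁) :=
    qtc_tendsto_sSup hT hsw.monotoneOn hbw
  have hzlim : Tendsto z (nhdsWithin T (Iio T)) (nhds L₂) :=
    qtc_tendsto_sSup hT hsz.monotoneOn hbz
  have hL₁ge : c₁ ≤ L₁ := by
    rw [← hw0]; exact le_csSup hbw (mem_image_of_mem w h0mem)
  have hL₂ge : c₂ ≤ L₂ := by
    rw [← hz0]; exact le_csSup hbz (mem_image_of_mem z h0mem)
  have hL₁le : L₁ ≤ c₁'' := by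
    refine csSup_le ⟨w 0, mem_image_of_mem w h0mem⟩ ?_
    rintro _ ⟨t, ht, rfl⟩
    exact ((hmem t ht).1.2).le
  have hL₂le : L₂ ≤ c₂'' := by
    refine csSup_le ⟨z 0, mem_image_of_mem z h0mem⟩ ?_
    rintro _ ⟨t, ht, rfl⟩
    exact ((hmem t ht).2.2).le
  by_cases hA : L₂ = c₂''
  · -- z tends to c₂'' and g blows up
    left
    rw [hA] at hzlim
    refine ⟨hzlim, ?_⟩
    rintro ⟨M, hM⟩
    set M' := max M 1 with hM'def
    have hM' : (0:ℝ) < M' := lt_of_lt_of_le one_pos (le_max_right M 1)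
    obtain ⟨δ, hδ, hblow⟩ := hg_blow M' hM'
    have hev1 : ∀ᶠ t in nhdsWithin T (Iio T), c₂'' - δ < z t :=
      hzlim.eventually (eventually_gt_nhds (by linarith))
    have hev2 : ∀ᶠ t in nhdsWithin T (Iio T), t ∈ Ioo (0:ℝ) T :=
      eventually_of_mem (Ioo_mem_nhdsLT hT) fun t ht => ht
    obtain ⟨t, h1, h2⟩ := (hev1.and hev2).exists
    have hmt := hmem t ⟨h2.1.le, h2.2⟩
    have hgt := hblow (w t) (z t) h1 hmt.2.2 hmt.1.1 hmt.1.2.le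
    have habs := hM t ⟨h2.1.le, h2.2⟩
    have h3 : g (w t) (z t) ≤ M := le_trans (le_abs_self _) habs
    have h4 : M ≤ M' := le_max_left M 1
    linarith
  · have hL₂lt : L₂ < c₂'' := lt_of_le_of_ne hL₂le hA
    by_cases hB : L₁ = c₁''
    · right
      rw [hB] at hwlim
      exact hwlim
    · exfalso
      have hL₁lt : L₁ < c₁'' := lt_of_le_of_ne hL₁le hB
            -- a compact box strictly inside the domain, containing the closure of the trajectory
      set r := min (c₁'' - L₁) (c₂'' - L₂) / 2 with hrdef
      have hrpos : 0 < r := by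
        have h1 : (0:ℝ) < c₁'' - L₁ := by linarith
        have h2 : (0:ℝ) < c₂'' - L₂ := by linarith
        have := lt_min h1 h2
        positivity
      have hr₁ : L₁ + r < c₁'' := by
        have := min_le_left (c₁'' - L₁) (c₂'' - L₂)
        rw [hrdef]; linarith
      have hr₂ : L₂ + r < c₂'' := by
        have := min_le_right (c₁'' - L₁) (c₂'' - L₂)
        rw [hrdef]; linarith
      set B : Set (ℝ × ℝ) := Icc c₁ (L₁ + r) ×ˢ Icc c₂ (L₂ + r) with hBdef
      have hBsub : B ⊆ Ico c₁ c₁'' ×ˢ Ico c₂ c₂'' := fun p hp =>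
        ⟨⟨hp.1.1, lt_of_le_of_lt hp.1.2 hr₁⟩, ⟨hp.2.1, lt_of_le_of_lt hp.2.2 hr₂⟩⟩
      have hBcomp : IsCompact B := isCompact_Icc.prod isCompact_Icc
      have hBne : B.Nonempty :=
        ⟨(c₁, c₂), ⟨⟨le_refl c₁, by linarith⟩, ⟨le_refl c₂, by linarith⟩⟩⟩
      obtain ⟨pf, hpf, hfmin⟩ := hBcomp.exists_isMinOn hBne (hf_cont.mono hBsub)
      obtain ⟨pg, hpg, hgmin⟩ := hBcomp.exists_isMinOn hBne (hg_cont.mono hBsub)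
      obtain ⟨qf, hqf, hfmax⟩ := hBcomp.exists_isMaxOn hBne (hf_cont.mono hBsub)
      obtain ⟨qg, hqg, hgmax⟩ := hBcomp.exists_isMaxOn hBne (hg_cont.mono hBsub)
      set m := min (f pf.1 pf.2) (g pg.1 pg.2) with hmdef
      set M := max (f qf.1 qf.2) (g qg.1 qg.2) with hMdef
      have hm : 0 < m := lt_min
        (hf_pos _ (hBsub hpf).1 _ (hBsub hpf).2) (hg_pos _ (hBsub hpg).1 _ (hBsub hpg).2)
      have hfB : ∀ p ∈ B, m ≤ f p.1 p.2 ∧ f p.1 p.2 ≤ M := fun p hp =>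
        ⟨(min_le_left _ _).trans (hfmin hp), (hfmax hp).trans (le_max_left _ _)⟩
      have hgB : ∀ p ∈ B, m ≤ g p.1 p.2 ∧ g p.1 p.2 ≤ M := fun p hp =>
        ⟨(min_le_right _ _).trans (hgmin hp), (hgmax hp).trans (le_max_right _ _)⟩
      have hMm : m ≤ M := le_trans (hfB pf hpf).1 (hfB pf hpf).2
      have hM0 : 0 < M := hm.trans_le hMm
      -- first Peano: solve dx/dy = f(x,y)/g(x,y) with x(L₂) = L₁
      set ρ' := r * m / M with hρ'def
      have hρ' : 0 < ρ' := by positivity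
      have hρ'r : ρ' ≤ r := by
        rw [hρ'def, div_le_iff₀ hM0]
        nlinarith
      have hsubD : ∀ y ∈ Icc L₂ (L₂ + ρ'), ∀ v ∈ Icc L₁ (L₁ + r), (v, y) ∈ B := by
        intro y hy v hv
        exact ⟨⟨hL₁ge.trans hv.1, hv.2⟩, ⟨hL₂ge.trans hy.1, hy.2.trans (by linarith)⟩⟩
      have hKρeq : (M / m) * ρ' = r := by
        rw [hρ'def]; field_simp
      have peano1 := qtc_peano (a := L₂) (ρ := ρ') (b := L₁) (r := r) (K := M / m)
        (h := fun y v => f v y / g v y) hρ' (by positivity) (le_of_eq hKρeq) ?_ ?_ ?_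
      rotate_left
      · -- continuity of the phase field
        have hswap : ContinuousOn (fun p : ℝ × ℝ => (p.2, p.1))
            (Icc L₂ (L₂ + ρ') ×ˢ Icc L₁ (L₁ + r)) := (continuous_snd.prodMk continuous_fst).continuousOn
        have hmapsto : ∀ p ∈ Icc L₂ (L₂ + ρ') ×ˢ Icc L₁ (L₁ + r),
            ((p.2 : ℝ), (p.1 : ℝ)) ∈ Ico c₁ c₁'' ×ˢ Ico c₂ c₂'' :=
          fun p hp => hBsub (hsubD p.1 hp.1 p.2 hp.2)
        have hfc : ContinuousOn (fun p : ℝ × ℝ => f p.2 p.1)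
            (Icc L₂ (L₂ + ρ') ×ˢ Icc L₁ (L₁ + r)) :=
          hf_cont.comp hswap hmapsto
        have hgc : ContinuousOn (fun p : ℝ × ℝ => g p.2 p.1)
            (Icc L₂ (L₂ + ρ') ×ˢ Icc L₁ (L₁ + r)) :=
          hg_cont.comp hswap hmapsto
        exact hfc.div hgc fun p hp =>
          ne_of_gt (hg_pos _ (hmapsto p hp).1 _ (hmapsto p hp).2)
      · intro y hy v hv
        have hmem' := hBsub (hsubD y hy v hv)
        exact div_nonneg (hf_pos _ hmem'.1 _ hmem'.2).le (hg_pos _ hmem'.1 _ hmem'.2).le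
      · intro y hy v hv
        have hmemB := hsubD y hy v hv
        exact div_le_div₀ hM0.le (hfB _ hmemB).2 hm (hgB _ hmemB).1
      obtain ⟨x, hxa, hxcont, hxmem, hx'0⟩ := peano1
      have hx' : ∀ ζ ∈ Icc L₂ (L₂ + ρ'), HasDerivWithinAt x
          (f (x ζ) ζ / g (x ζ) ζ) (Icc L₂ (L₂ + ρ')) ζ := fun ζ hζ => hx'0 ζ hζ
      have hxB : ∀ ζ ∈ Icc L₂ (L₂ + ρ'), (x ζ, ζ) ∈ B := by
        intro ζ hζ
        refine hsubD ζ hζ (x ζ) ⟨(hxmem ζ hζ).1, ?_⟩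
        have h1 := (hxmem ζ hζ).2
        have h2 : ζ - L₂ ≤ ρ' := by linarith [hζ.2]
        have h3 : (M/m) * (ζ - L₂) ≤ (M/m) * ρ' :=
          mul_le_mul_of_nonneg_left h2 (by positivity)
        rw [hKρeq] at h3
        linarith
      -- second Peano: solve dZ/dt = g(x(Z), Z) with Z(T) = L₂
      set ρ₂ := ρ' / M with hρ₂def
      have hρ₂ : 0 < ρ₂ := by positivity
      have peano2 := qtc_peano (a := T) (ρ := ρ₂) (b := L₂) (r := ρ') (K := M)
        (h := fun _ ζ => g (x ζ) ζ) hρ₂ hM0.le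
        (le_of_eq (by rw [hρ₂def]; field_simp)) ?_ ?_ ?_
      rotate_left
      · -- continuity of the time field
        have hinner : ContinuousOn (fun p : ℝ × ℝ => ((x p.2 : ℝ), (p.2 : ℝ)))
            (Icc T (T + ρ₂) ×ˢ Icc L₂ (L₂ + ρ')) := by
          refine ContinuousOn.prodMk ?_ continuous_snd.continuousOn
          exact hxcont.comp continuous_snd.continuousOn fun p hp => hp.2
        refine hg_cont.comp hinner fun p hp => hBsub (hxB p.2 hp.2)
      · intro s hs ζ hζ
        have hmem' := hBsub (hxB ζ hζ)
        exact (hg_pos _ hmem'.1 _ hmem'.2).le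
      · intro s hs ζ hζ
        exact (hgB _ (hxB ζ hζ)).2
      obtain ⟨Z, hZa, hZcont, hZmem2, hZ'0⟩ := peano2
      have hZ' : ∀ t ∈ Icc T (T + ρ₂), HasDerivWithinAt Z
          (g (x (Z t)) (Z t)) (Icc T (T + ρ₂)) t := fun t ht => hZ'0 t ht
      have hZmaps : MapsTo Z (Icc T (T + ρ₂)) (Icc L₂ (L₂ + ρ')) := by
        intro t ht
        refine ⟨(hZmem2 t ht).1, ?_⟩
        have h1 := (hZmem2 t ht).2
        have h2 : t - T ≤ ρ₂ := by linarith [ht.2]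
        have h3 : M * (t - T) ≤ M * ρ₂ := mul_le_mul_of_nonneg_left h2 hM0.le
        have h4 : M * ρ₂ = ρ' := by rw [hρ₂def]; field_simp
        linarith
      have hgz : ∀ t ∈ Icc T (T + ρ₂), 0 < g (x (Z t)) (Z t) := fun t ht =>
        hg_pos _ (hBsub (hxB _ (hZmaps ht))).1 _ (hBsub (hxB _ (hZmaps ht))).2
      -- Z stays strictly below L₂ + ρ' before the final time
      have hZub : ∀ t ∈ Icc T (T + ρ₂), t < T + ρ₂ → Z t < L₂ + ρ' := by
        intro t ht htlt
        have h1 := (hZmem2 t ht).2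
        have h2 : M * (t - T) < M * ρ₂ := by
          apply mul_lt_mul_of_pos_left _ hM0
          linarith
        have h4 : M * ρ₂ = ρ' := by rw [hρ₂def]; field_simp
        linarith
      have hZlb : ∀ t ∈ Icc T (T + ρ₂), T < t → L₂ < Z t := by
        intro t ht htlt
        have hstrict : StrictMonoOn Z (Icc T (T + ρ₂)) := by
          apply strictMonoOn_of_deriv_pos (convex_Icc _ _) hZcont
          intro τ hτ
          rw [interior_Icc] at hτ
          rw [((hZ' τ (Ioo_subset_Icc_self hτ)).hasDerivAt
            (Icc_mem_nhds hτ.1 hτ.2)).deriv]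
          exact hgz τ (Ioo_subset_Icc_self hτ)
        have := hstrict (left_mem_Icc.2 (by linarith)) ht htlt
        rwa [hZa] at this
      -- the extension
      set T' := T + ρ₂ with hT'def
      set Wf : ℝ → ℝ := fun t => if t < T then w t else x (Z t) with hWfdef
      set Zf : ℝ → ℝ := fun t => if t < T then z t else Z t with hZfdef
      have hWfeq : ∀ τ ∈ Iio T, Wf τ = w τ := fun τ hτ => if_pos hτ
      have hZfeq : ∀ τ ∈ Iio T, Zf τ = z τ := fun τ hτ => if_pos hτ
      have hWfeq2 : ∀ τ, T ≤ τ → Wf τ = x (Z τ) := fun τ hτ => if_neg (not_lt.2 hτ)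
      have hZfeq2 : ∀ τ, T ≤ τ → Zf τ = Z τ := fun τ hτ => if_neg (not_lt.2 hτ)
      have hWfT : Wf T = L₁ := by rw [hWfeq2 T (le_refl T), hZa, hxa]
      have hZfT : Zf T = L₂ := by rw [hZfeq2 T (le_refl T), hZa]
      -- limits of the derivatives from the left
      have hLregion : (L₁, L₂) ∈ Ico c₁ c₁'' ×ˢ Ico c₂ c₂'' :=
        ⟨⟨hL₁ge, hL₁lt⟩, ⟨hL₂ge, hL₂lt⟩⟩
      have hwzlim : Tendsto (fun τ => (w τ, z τ)) (nhdsWithin T (Iio T)) (nhds (L₁, L₂)) :=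
        hwlim.prodMk_nhds hzlim
      have hwzlim' : Tendsto (fun τ => (w τ, z τ)) (nhdsWithin T (Iio T))
          (nhdsWithin (L₁, L₂) (Ico c₁ c₁'' ×ˢ Ico c₂ c₂'')) := by
        rw [tendsto_nhdsWithin_iff]
        refine ⟨hwzlim, ?_⟩
        filter_upwards [Ioo_mem_nhdsLT hT] with τ hτ
        exact ⟨(hmem τ ⟨hτ.1.le, hτ.2⟩).1, (hmem τ ⟨hτ.1.le, hτ.2⟩).2⟩
      have hflim : Tendsto (fun τ => f (w τ) (z τ)) (nhdsWithin T (Iio T)) (nhds (f L₁ L₂)) :=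
        (hf_cont (L₁, L₂) hLregion).tendsto.comp hwzlim'
      have hglim : Tendsto (fun τ => g (w τ) (z τ)) (nhdsWithin T (Iio T)) (nhds (g L₁ L₂)) :=
        (hg_cont (L₁, L₂) hLregion).tendsto.comp hwzlim'
      -- derivative of the extension left of T
      have hWD : ∀ τ ∈ Ico (0:ℝ) T, HasDerivAt Wf (f (w τ) (z τ)) τ := by
        intro τ hτ
        refine (hw' τ hτ).congr_of_eventuallyEq ?_
        filter_upwards [Iio_mem_nhds hτ.2] with σ hσ
        exact hWfeq σ hσ
      have hZD : ∀ τ ∈ Ico (0:ℝ) T, HasDerivAt Zf (g (w τ) (z τ)) τ := by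
        intro τ hτ
        refine (hz' τ hτ).congr_of_eventuallyEq ?_
        filter_upwards [Iio_mem_nhds hτ.2] with σ hσ
        exact hZfeq σ hσ
      have hWleft : HasDerivWithinAt Wf (f L₁ L₂) (Iic T) T := by
        refine hasDerivWithinAt_Iic_of_tendsto_deriv (s := Ioo 0 T) ?_ ?_ ?_ ?_
        · exact fun τ hτ => (hWD τ ⟨hτ.1.le, hτ.2⟩).differentiableAt.differentiableWithinAt
        · have h1 : Tendsto Wf (nhdsWithin T (Ioo (0:ℝ) T)) (nhds L₁) := by
            refine (hwlim.mono_left (nhdsWithin_mono T Ioo_subset_Iio_self)).congr' ?_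
            filter_upwards [self_mem_nhdsWithin] with σ hσ
            exact (hWfeq σ hσ.2).symm
          exact (hWfT ▸ h1 : Tendsto Wf (nhdsWithin T (Ioo (0:ℝ) T)) (nhds (Wf T)))
        · exact Ioo_mem_nhdsLT_of_mem ⟨hT, le_refl T⟩
        · refine hflim.congr' ?_
          filter_upwards [Ioo_mem_nhdsLT hT] with τ hτ
          exact ((hWD τ ⟨hτ.1.le, hτ.2⟩).deriv).symm
      have hZleft : HasDerivWithinAt Zf (g L₁ L₂) (Iic T) T := by
        refine hasDerivWithinAt_Iic_of_tendsto_deriv (s := Ioo 0 T) ?_ ?_ ?_ ?_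
        · exact fun τ hτ => (hZD τ ⟨hτ.1.le, hτ.2⟩).differentiableAt.differentiableWithinAt
        · have h1 : Tendsto Zf (nhdsWithin T (Ioo (0:ℝ) T)) (nhds L₂) := by
            refine (hzlim.mono_left (nhdsWithin_mono T Ioo_subset_Iio_self)).congr' ?_
            filter_upwards [self_mem_nhdsWithin] with σ hσ
            exact (hZfeq σ hσ.2).symm
          exact (hZfT ▸ h1 : Tendsto Zf (nhdsWithin T (Ioo (0:ℝ) T)) (nhds (Zf T)))
        · exact Ioo_mem_nhdsLT_of_mem ⟨hT, le_refl T⟩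
        · refine hglim.congr' ?_
          filter_upwards [Ioo_mem_nhdsLT hT] with τ hτ
          exact ((hZD τ ⟨hτ.1.le, hτ.2⟩).deriv).symm
      -- derivative of the composite x ∘ Z on [T, T + ρ₂]
      have hxZ : ∀ t ∈ Icc T (T + ρ₂), HasDerivWithinAt (fun τ => x (Z τ))
          (f (x (Z t)) (Z t) / g (x (Z t)) (Z t) * g (x (Z t)) (Z t)) (Icc T (T + ρ₂)) t :=
        fun t ht => ((hx' (Z t) (hZmaps ht)).comp t (hZ' t ht) hZmaps)
      have hxZ' : ∀ t ∈ Icc T (T + ρ₂), HasDerivWithinAt (fun τ => x (Z τ))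
          (f (x (Z t)) (Z t)) (Icc T (T + ρ₂)) t := by
        intro t ht
        have := hxZ t ht
        rwa [div_mul_cancel₀ _ (ne_of_gt (hgz t ht))] at this
      have hWright : HasDerivWithinAt Wf (f L₁ L₂) (Ici T) T := by
        have h1 := hxZ' T (left_mem_Icc.2 (by linarith))
        rw [hZa, hxa] at h1
        have h2 : HasDerivWithinAt Wf (f L₁ L₂) (Icc T (T + ρ₂)) T :=
          h1.congr (fun τ hτ => hWfeq2 τ hτ.1) (by rw [hWfeq2 T (le_refl T)])
        exact h2.mono_of_mem_nhdsWithin (Icc_mem_nhdsGE_of_mem ⟨le_refl T, by linarith⟩)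
      have hZright : HasDerivWithinAt Zf (g L₁ L₂) (Ici T) T := by
        have h1 := hZ' T (left_mem_Icc.2 (by linarith))
        rw [hZa] at h1
        rw [hxa] at h1
        have h2 : HasDerivWithinAt Zf (g L₁ L₂) (Icc T (T + ρ₂)) T :=
          h1.congr (fun τ hτ => hZfeq2 τ hτ.1) (by rw [hZfeq2 T (le_refl T)])
        exact h2.mono_of_mem_nhdsWithin (Icc_mem_nhdsGE_of_mem ⟨le_refl T, by linarith⟩)
      have hWT : HasDerivAt Wf (f L₁ L₂) T := by
        have h1 := hWleft.union hWright
        rw [Iic_union_Ici] at h1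
        rwa [hasDerivWithinAt_univ] at h1
      have hZT : HasDerivAt Zf (g L₁ L₂) T := by
        have h1 := hZleft.union hZright
        rw [Iic_union_Ici] at h1
        rwa [hasDerivWithinAt_univ] at h1
      -- now assemble the witness
      apply hmax
      refine ⟨T', Wf, Zf, by rw [hT'def]; linarith, ?_, ?_, ?_, ?_⟩
      · intro t ht
        exact ⟨hWfeq t ht.2, hZfeq t ht.2⟩
      · rw [hWfeq 0 hT]; exact hw0
      · rw [hZfeq 0 hT]; exact hz0
      · intro t ht
        rcases lt_trichotomy t T with hcase | hcase | hcase
        · -- t < T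
          have htmem : t ∈ Ico (0:ℝ) T := ⟨ht.1, hcase⟩
          have hvals : Wf t = w t ∧ Zf t = z t := ⟨hWfeq t hcase, hZfeq t hcase⟩
          refine ⟨?_, ?_, ?_⟩
          · rw [hvals.1, hvals.2]; exact hmem t htmem
          · rw [hvals.1, hvals.2]; exact hWD t htmem
          · rw [hvals.1, hvals.2]; exact hZD t htmem
        · -- t = T
          subst hcase
          refine ⟨?_, ?_, ?_⟩
          · rw [hWfT, hZfT]
            exact ⟨⟨hL₁ge, hL₁lt⟩, ⟨hL₂ge, hL₂lt⟩⟩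
          · rw [hWfT, hZfT]; exact hWT
          · rw [hWfT, hZfT]; exact hZT
        · -- T < t < T'
          have htI : t ∈ Icc T (T + ρ₂) := ⟨hcase.le, by
            have := ht.2; rw [hT'def] at this; exact this.le⟩
          have htlt : t < T + ρ₂ := by
            have := ht.2; rwa [hT'def] at this
          have hvals : Wf t = x (Z t) ∧ Zf t = Z t :=
            ⟨hWfeq2 t hcase.le, hZfeq2 t hcase.le⟩
          have hBmem := hBsub (hxB (Z t) (hZmaps htI))
          refine ⟨?_, ?_, ?_⟩
          · rw [hvals.1, hvals.2]
            exact ⟨hBmem.1, hBmem.2⟩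
          · rw [hvals.1, hvals.2]
            have hD := (hxZ' t htI).hasDerivAt (Icc_mem_nhds hcase htlt)
            refine hD.congr_of_eventuallyEq ?_
            filter_upwards [Ioi_mem_nhds hcase] with σ hσ
            exact hWfeq2 σ hσ.le
          · rw [hvals.1, hvals.2]
            have hD := (hZ' t htI).hasDerivAt (Icc_mem_nhds hcase htlt)
            refine hD.congr_of_eventuallyEq ?_
            filter_upwards [Ioi_mem_nhds hcase] with σ hσ
            exact hZfeq2 σ hσ.le
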